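/- Let (ξ_p)_{p∈ℕ} be i.i.d. ℝ^d-valued random variables with E[ξ_0] = 0 and E[‖ξ_0‖²] < ∞, and set Ψ^{kl} = E[ξ_0^k·ξ_0^l] for 1 ≤ k, l ≤ d. Then for every 1 ≤ k, l ≤ d, almost surely, −(1/n)·Σ_{p=1}^{n−1} (ξ_p^k − ξ_{p−1}^k)·(ξ_{p+1}^l − ξ_p^l) → Ψ^{kl} as n → ∞. -/

import Mathlib

open MeasureTheory ProbabilityTheory Filter

lemma my_coord_abs_le_norm {d : ℕ} (x : EuclideanSpace ℝ (Fin d)) (k : Fin d) :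
    |x k| ≤ ‖x‖ := by
  rw [EuclideanSpace.norm_eq]
  have h1 : |x k| = Real.sqrt (‖x k‖ ^ 2) := by
    rw [Real.norm_eq_abs, Real.sqrt_sq_eq_abs, abs_abs]
  rw [h1]
  exact Real.sqrt_le_sqrt (Finset.single_le_sum
    (fun i _ => sq_nonneg ‖x i‖) (Finset.mem_univ k))

lemma my_meas_coord {d : ℕ} (k : Fin d) :
    Measurable (fun x : EuclideanSpace ℝ (Fin d) => x k) :=
  (EuclideanSpace.proj (𝕜 := ℝ) k).continuous.measurable

section aux

variable {Ω : Type*} [MeasureSpace Ω] [IsProbabilityMeasure (ℙ : Measure Ω)]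
  {d : ℕ} {ξ : ℕ → Ω → EuclideanSpace ℝ (Fin d)}

lemma my_identξ (hmeas : ∀ p, Measurable (ξ p))
    (hident : ∀ p, Measure.map (ξ p) ℙ = Measure.map (ξ 0) ℙ) (p : ℕ) :
    IdentDistrib (ξ p) (ξ 0) ℙ ℙ :=
  ⟨(hmeas p).aemeasurable, (hmeas 0).aemeasurable, hident p⟩

lemma my_sq_int (hmeas : ∀ p, Measurable (ξ p))
    (hident : ∀ p, Measure.map (ξ p) ℙ = Measure.map (ξ 0) ℙ)
    (hmom : Integrable (fun ω => ‖ξ 0 ω‖ ^ 2) ℙ) (p : ℕ) :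
    Integrable (fun ω => ‖ξ p ω‖ ^ 2) ℙ :=
  (((my_identξ hmeas hident p).comp (measurable_norm.pow_const 2)).integrable_iff).2 hmom

lemma my_int_prod (hmeas : ∀ p, Measurable (ξ p))
    (hident : ∀ p, Measure.map (ξ p) ℙ = Measure.map (ξ 0) ℙ)
    (hmom : Integrable (fun ω => ‖ξ 0 ω‖ ^ 2) ℙ) (a b : ℕ) (k l : Fin d) :
    Integrable (fun ω => ξ a ω k * ξ b ω l) ℙ := by
  refine Integrable.mono'
    ((my_sq_int hmeas hident hmom a).add (my_sq_int hmeas hident hmom b)) ?_ ?_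
  · exact (((my_meas_coord k).comp (hmeas a)).mul
      ((my_meas_coord l).comp (hmeas b))).aestronglyMeasurable
  · refine Filter.Eventually.of_forall fun ω => ?_
    have h1 := my_coord_abs_le_norm (ξ a ω) k
    have h2 := my_coord_abs_le_norm (ξ b ω) l
    rw [Real.norm_eq_abs, abs_mul]
    simp only [Pi.add_apply]
    nlinarith [abs_nonneg (ξ a ω k), abs_nonneg (ξ b ω l), norm_nonneg (ξ a ω),
      norm_nonneg (ξ b ω), sq_nonneg (‖ξ a ω‖ - ‖ξ b ω‖),
      mul_le_mul h1 h2 (abs_nonneg _) (norm_nonneg _)]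

lemma my_int_coord (hmeas : ∀ p, Measurable (ξ p))
    (hident : ∀ p, Measure.map (ξ p) ℙ = Measure.map (ξ 0) ℙ)
    (hmom : Integrable (fun ω => ‖ξ 0 ω‖ ^ 2) ℙ) (a : ℕ) (k : Fin d) :
    Integrable (fun ω => ξ a ω k) ℙ := by
  refine Integrable.mono' ((my_sq_int hmeas hident hmom a).add (integrable_const 1))
    ((my_meas_coord k).comp (hmeas a)).aestronglyMeasurable
    (Filter.Eventually.of_forall fun ω => ?_)
  have h1 := my_coord_abs_le_norm (ξ a ω) k
  rw [Real.norm_eq_abs]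
  simp only [Pi.add_apply]
  nlinarith [norm_nonneg (ξ a ω), sq_nonneg (‖ξ a ω‖ - 1)]

lemma my_mean_coord (hmeas : ∀ p, Measurable (ξ p))
    (hident : ∀ p, Measure.map (ξ p) ℙ = Measure.map (ξ 0) ℙ)
    (hmean : ∫ ω, ξ 0 ω ∂ℙ = 0)
    (hmom : Integrable (fun ω => ‖ξ 0 ω‖ ^ 2) ℙ) (a : ℕ) (k : Fin d) :
    ∫ ω, ξ a ω k ∂ℙ = 0 := by
  have h0 : ∫ ω, ξ 0 ω k ∂ℙ = 0 := by
    have hint : Integrable (ξ 0) ℙ := by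
      refine Integrable.mono' (hmom.add (integrable_const 1))
        (hmeas 0).aestronglyMeasurable (Filter.Eventually.of_forall fun ω => ?_)
      simp only [Pi.add_apply]
      nlinarith [norm_nonneg (ξ 0 ω), sq_nonneg (‖ξ 0 ω‖ - 1)]
    have hc := (EuclideanSpace.proj k : EuclideanSpace ℝ (Fin d) →L[ℝ] ℝ).integral_comp_comm hint
    rw [hmean] at hc
    simpa using hc
  calc ∫ ω, ξ a ω k ∂ℙ = ∫ ω, ξ 0 ω k ∂ℙ :=
        ((my_identξ hmeas hident a).comp (my_meas_coord k)).integral_eq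
    _ = 0 := h0

lemma my_mean_prod (hmeas : ∀ p, Measurable (ξ p))
    (hindep : iIndepFun ξ ℙ)
    (hident : ∀ p, Measure.map (ξ p) ℙ = Measure.map (ξ 0) ℙ)
    (hmean : ∫ ω, ξ 0 ω ∂ℙ = 0)
    (hmom : Integrable (fun ω => ‖ξ 0 ω‖ ^ 2) ℙ)
    (a b : ℕ) (hab : a ≠ b) (k l : Fin d) :
    ∫ ω, ξ a ω k * ξ b ω l ∂ℙ = 0 := by
  have hik : IndepFun (fun ω => ξ a ω k) (fun ω => ξ b ω l) ℙ :=
    (hindep.indepFun hab).comp (my_meas_coord k) (my_meas_coord l)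
  have h2 := hik.integral_fun_mul_eq_mul_integral (my_int_coord hmeas hident hmom a k).aestronglyMeasurable
    (my_int_coord hmeas hident hmom b l).aestronglyMeasurable
  rw [my_mean_coord hmeas hident hmean hmom a k, zero_mul] at h2
  exact h2

lemma my_pair_ident (hmeas : ∀ p, Measurable (ξ p))
    (hindep : iIndepFun ξ ℙ)
    (hident : ∀ p, Measure.map (ξ p) ℙ = Measure.map (ξ 0) ℙ)
    (a b : ℕ) (hab : a ≠ b) :
    IdentDistrib (fun ω => (ξ a ω, ξ b ω)) (fun ω => (ξ 0 ω, ξ 1 ω)) ℙ ℙ := by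
  have h01 : (0 : ℕ) ≠ 1 := by omega
  refine ⟨((hmeas a).prodMk (hmeas b)).aemeasurable,
    ((hmeas 0).prodMk (hmeas 1)).aemeasurable, ?_⟩
  rw [(indepFun_iff_map_prod_eq_prod_map_map (hmeas a).aemeasurable
        (hmeas b).aemeasurable).1 (hindep.indepFun hab),
    (indepFun_iff_map_prod_eq_prod_map_map (hmeas 0).aemeasurable
        (hmeas 1).aemeasurable).1 (hindep.indepFun h01),
    hident a, hident b, hident 1]

end aux

section aux2
variable {Ω : Type*} [MeasureSpace Ω] [IsProbabilityMeasure (ℙ : Measure Ω)]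
  {d : ℕ} {ξ : ℕ → Ω → EuclideanSpace ℝ (Fin d)}

lemma my_diag_slln (hmeas : ∀ p, Measurable (ξ p))
    (hindep : iIndepFun ξ ℙ)
    (hident : ∀ p, Measure.map (ξ p) ℙ = Measure.map (ξ 0) ℙ)
    (hmom : Integrable (fun ω => ‖ξ 0 ω‖ ^ 2) ℙ) (k l : Fin d) :
    ∀ᵐ ω ∂ℙ, Tendsto (fun n : ℕ => (1 / (n : ℝ)) * ∑ p ∈ Finset.range n, ξ p ω k * ξ p ω l)
      atTop (nhds (∫ ω, ξ 0 ω k * ξ 0 ω l ∂ℙ)) := by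
  have φmeas : Measurable (fun x : EuclideanSpace ℝ (Fin d) => x k * x l) :=
    (my_meas_coord k).mul (my_meas_coord l)
  have hint : Integrable (fun ω => ξ 0 ω k * ξ 0 ω l) ℙ :=
    my_int_prod hmeas hident hmom 0 0 k l
  have hpind : Pairwise (Function.onFun (IndepFun · · ℙ) (fun p ω => ξ p ω k * ξ p ω l)) :=
    fun i j hij => (hindep.indepFun hij).comp φmeas φmeas
  have hid : ∀ p, IdentDistrib (fun ω => ξ p ω k * ξ p ω l) (fun ω => ξ 0 ω k * ξ 0 ω l) ℙ ℙ :=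
    fun p => (my_identξ hmeas hident p).comp φmeas
  filter_upwards [strong_law_ae_real (fun p ω => ξ p ω k * ξ p ω l) hint hpind hid] with ω hω
  exact Tendsto.congr (fun n => (one_div_mul_eq_div _ _).symm) hω

lemma my_lag_slln (hmeas : ∀ p, Measurable (ξ p))
    (hindep : iIndepFun ξ ℙ)
    (hident : ∀ p, Measure.map (ξ p) ℙ = Measure.map (ξ 0) ℙ)
    (hmean : ∫ ω, ξ 0 ω ∂ℙ = 0)
    (hmom : Integrable (fun ω => ‖ξ 0 ω‖ ^ 2) ℙ) (k l : Fin d)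
    (δ m r : ℕ) (hδ : 0 < δ) (hδm : δ < m) :
    ∀ᵐ ω ∂ℙ, Tendsto (fun J : ℕ =>
        (1 / (J : ℝ)) * ∑ j ∈ Finset.range J, ξ (m * j + r) ω k * ξ (m * j + r + δ) ω l)
      atTop (nhds 0) := by
  have hm : 0 < m := hδ.trans hδm
  have hne : ∀ j : ℕ, m * j + r ≠ m * j + r + δ := fun j => by omega
  have φmeas : Measurable
      (fun q : EuclideanSpace ℝ (Fin d) × EuclideanSpace ℝ (Fin d) => q.1 k * q.2 l) :=
    ((my_meas_coord k).comp measurable_fst).mul ((my_meas_coord l).comp measurable_snd)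
  set Y : ℕ → Ω → ℝ := fun j ω => ξ (m * j + r) ω k * ξ (m * j + r + δ) ω l with hY
  have hidY : ∀ j, IdentDistrib (Y j) (Y 0) ℙ ℙ := by
    intro j
    have h1 := (my_pair_ident hmeas hindep hident (m * j + r) (m * j + r + δ) (hne j)).comp φmeas
    have h2 := (my_pair_ident hmeas hindep hident (m * 0 + r) (m * 0 + r + δ) (hne 0)).comp φmeas
    exact h1.trans h2.symm
  have hintY : Integrable (Y 0) ℙ := my_int_prod hmeas hident hmom _ _ k l
  have key : ∀ i j : ℕ, i ≠ j → m * i + r ≠ m * j + r + δ := by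
    intro i j hij heq
    rcases lt_or_gt_of_ne hij with h | h
    · have h1 : m * i + m ≤ m * j := by
        have h2 := Nat.mul_le_mul_left m (Nat.succ_le_of_lt h)
        calc m * i + m = m * (i + 1) := by ring
          _ ≤ m * j := h2
      linarith
    · have h1 : m * j + m ≤ m * i := by
        have h2 := Nat.mul_le_mul_left m (Nat.succ_le_of_lt h)
        calc m * j + m = m * (j + 1) := by ring
          _ ≤ m * i := h2
      linarith
  have hindepY : Pairwise (Function.onFun (IndepFun · · ℙ) Y) := by
    intro i j hij
    have d1 : m * i + r ≠ m * j + r :=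
      fun heq => hij (Nat.eq_of_mul_eq_mul_left hm (Nat.add_right_cancel heq))
    have d2 : m * i + r ≠ m * j + r + δ := key i j hij
    have d3 : m * i + r + δ ≠ m * j + r := (key j i hij.symm).symm
    have d4 : m * i + r + δ ≠ m * j + r + δ :=
      fun heq => hij (Nat.eq_of_mul_eq_mul_left hm
        (Nat.add_right_cancel (Nat.add_right_cancel heq)))
    exact (hindep.indepFun_prodMk_prodMk hmeas _ _ _ _ d1 d2 d3 d4).comp φmeas φmeas
  have hmean0 : ∫ ω, Y 0 ω ∂ℙ = 0 :=
    my_mean_prod hmeas hindep hident hmean hmom _ _ (hne 0) k l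
  have hae := strong_law_ae_real Y hintY hindepY hidY
  rw [hmean0] at hae
  filter_upwards [hae] with ω hω
  exact Tendsto.congr (fun n => (one_div_mul_eq_div _ _).symm) hω

end aux2
open MeasureTheory ProbabilityTheory Filter

lemma myD1 (m : ℕ) (hm : 0 < m) (a : ℕ → ℝ) (n : ℕ) :
    ∑ p ∈ Finset.range n, a p
      = ∑ r ∈ Finset.range m, ∑ j ∈ Finset.range ((n + m - 1 - r) / m), a (m * j + r) := by
  classical
  rw [← Finset.sum_fiberwise_of_maps_to (g := fun p => p % m)
      (fun p _ => Finset.mem_range.2 (Nat.mod_lt _ hm)) a]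
  refine Finset.sum_congr rfl fun r hr => ?_
  have hrm : r < m := Finset.mem_range.1 hr
  refine Finset.sum_nbij' (fun p => p / m) (fun j => m * j + r) ?_ ?_ ?_ ?_ ?_
  · intro p hp
    simp only [Finset.mem_filter, Finset.mem_range] at hp
    have hkey : m * (p / m) + r = p := by
      conv_rhs => rw [← Nat.div_add_mod p m]
      rw [hp.2]
    rw [Finset.mem_range, Nat.lt_iff_add_one_le, Nat.le_div_iff_mul_le hm]
    have h1 : (p / m + 1) * m = m * (p / m) + m := by ring
    rw [h1]
    generalize h : m * (p / m) = t at hkey ⊢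
    omega
  · intro j hj
    rw [Finset.mem_range] at hj
    simp only [Finset.mem_filter, Finset.mem_range]
    constructor
    · have h1 : (j + 1) * m ≤ n + m - 1 - r :=
        (Nat.le_div_iff_mul_le hm).1 (Nat.succ_le_of_lt hj)
      have h2 : (j + 1) * m = m * j + m := by ring
      rw [h2] at h1
      generalize h : m * j = t at h1 ⊢
      omega
    · rw [Nat.mul_add_mod]
      exact Nat.mod_eq_of_lt hrm
  · intro p hp
    simp only [Finset.mem_filter, Finset.mem_range] at hp
    conv_rhs => rw [← Nat.div_add_mod p m]
    rw [hp.2]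
  · intro j _
    show (m * j + r) / m = j
    rw [Nat.mul_add_div hm, Nat.div_eq_of_lt hrm, Nat.add_zero]
  · intro p hp
    simp only [Finset.mem_filter, Finset.mem_range] at hp
    congr 1
    conv_lhs => rw [← Nat.div_add_mod p m]
    rw [hp.2]

lemma myD2 (m : ℕ) (hm : 0 < m) (a : ℕ → ℝ)
    (h : ∀ r, r < m → Tendsto (fun J : ℕ => (1 / (J : ℝ)) * ∑ j ∈ Finset.range J, a (m * j + r))
      atTop (nhds 0)) :
    Tendsto (fun n : ℕ => (1 / (n : ℝ)) * ∑ p ∈ Finset.range n, a p) atTop (nhds 0) := by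
  have main : Tendsto (fun n : ℕ => ∑ r ∈ Finset.range m,
      (1 / (n : ℝ)) * ∑ j ∈ Finset.range ((n + m - 1 - r) / m), a (m * j + r))
      atTop (nhds 0) := by
    have h0 : (0 : ℝ) = ∑ _r ∈ Finset.range m, (0 : ℝ) := by simp
    rw [h0]
    refine tendsto_finset_sum _ fun r hr => ?_
    have hrm : r < m := Finset.mem_range.1 hr
    have hct : Tendsto (fun n : ℕ => (n + m - 1 - r) / m) atTop atTop := by
      refine tendsto_atTop_atTop.2 fun b => ⟨m * b + r, fun n hn => ?_⟩
      rw [Nat.le_div_iff_mul_le hm]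
      have hbm : b * m = m * b := Nat.mul_comm b m
      rw [hbm]
      generalize h : m * b = t at hn ⊢
      omega
    have h1 := (h r hrm).comp hct
    have h1n := h1.norm
    rw [norm_zero] at h1n
    refine squeeze_zero_norm' ?_ h1n
    have hcle : ∀ n : ℕ, (n + m - 1 - r) / m ≤ n := by
      intro n
      have hn : n ≤ m * n := Nat.le_mul_of_pos_left n hm
      by_contra hcon
      push_neg at hcon
      have h2 : (n + 1) * m ≤ n + m - 1 - r :=
        (Nat.le_div_iff_mul_le hm).1 (Nat.succ_le_of_lt hcon)
      have h3 : (n + 1) * m = m * n + m := by ring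
      rw [h3] at h2
      generalize h : m * n = t at hn h2
      omega
    filter_upwards [hct.eventually_ge_atTop 1] with n hcn
    simp only [Function.comp_apply, norm_mul]
    refine mul_le_mul_of_nonneg_right ?_ (norm_nonneg _)
    have hc1 : (0 : ℝ) < (((n + m - 1 - r) / m : ℕ) : ℝ) := by exact_mod_cast hcn
    have hc2 : (((n + m - 1 - r) / m : ℕ) : ℝ) ≤ (n : ℝ) := by exact_mod_cast hcle n
    rw [Real.norm_eq_abs, Real.norm_eq_abs, abs_of_nonneg (by positivity),
      abs_of_nonneg (le_of_lt (by positivity))]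
    exact one_div_le_one_div_of_le hc1 hc2
  refine main.congr fun n => ?_
  rw [myD1 m hm a n, Finset.mul_sum]

lemma myD3 (a : ℕ → ℝ) (L : ℝ)
    (h : Tendsto (fun n : ℕ => (1 / (n : ℝ)) * ∑ j ∈ Finset.range n, a j) atTop (nhds L)) :
    Tendsto (fun n : ℕ => (1 / (n : ℝ)) * ∑ i ∈ Finset.range (n - 1), a (i + 1))
      atTop (nhds L) := by
  have h2 : Tendsto (fun n : ℕ => (1 / (n : ℝ)) * ∑ j ∈ Finset.range n, a j
      - (1 / (n : ℝ)) * a 0) atTop (nhds (L - 0)) :=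
    h.sub (by simpa using tendsto_one_div_atTop_nhds_zero_nat.mul_const (a 0))
  rw [sub_zero] at h2
  refine h2.congr' ?_
  filter_upwards [eventually_ge_atTop 1] with n hn
  have hsucc : n - 1 + 1 = n := by omega
  have hs : ∑ j ∈ Finset.range n, a j = (∑ i ∈ Finset.range (n - 1), a (i + 1)) + a 0 := by
    conv_lhs => rw [← hsucc]
    exact Finset.sum_range_succ' a (n - 1)
  rw [hs]
  ring

lemma myD4 (a : ℕ → ℝ)
    (h : Tendsto (fun n : ℕ => (1 / (n : ℝ)) * ∑ j ∈ Finset.range n, a j) atTop (nhds 0)) :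
    Tendsto (fun n : ℕ => (1 / (n : ℝ)) * ∑ i ∈ Finset.range (n - 1), a i) atTop (nhds 0) := by
  have h1 := h.comp (tendsto_sub_atTop_nat 1)
  have h1n := h1.norm
  rw [norm_zero] at h1n
  refine squeeze_zero_norm' ?_ h1n
  filter_upwards [eventually_ge_atTop 2] with n hn
  simp only [Function.comp_apply, norm_mul]
  refine mul_le_mul_of_nonneg_right ?_ (norm_nonneg _)
  have h2 : (0 : ℝ) < ((n - 1 : ℕ) : ℝ) := by
    have : 1 ≤ n - 1 := by omega
    exact_mod_cast Nat.lt_of_lt_of_le Nat.zero_lt_one this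
  have h3 : ((n - 1 : ℕ) : ℝ) ≤ (n : ℝ) := by exact_mod_cast Nat.sub_le n 1
  rw [Real.norm_eq_abs, Real.norm_eq_abs, abs_of_nonneg (by positivity),
    abs_of_nonneg (le_of_lt (by positivity))]
  exact one_div_le_one_div_of_le h2 h3
/-- Strong-law consistency of the noise-covariance estimator: for i.i.d.
centered square-integrable `ℝ^d`-valued `ξ_p` with covariance `Ψ`, almost
surely `−(1/n)·Σ_{p=1}^{n−1} (ξ_p^k − ξ_{p−1}^k)(ξ_{p+1}^l − ξ_p^l) → Ψ^{kl}`. -/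
theorem stmt_19 {Ω : Type*} [MeasureSpace Ω] [IsProbabilityMeasure (ℙ : Measure Ω)]
    (d : ℕ) (ξ : ℕ → Ω → EuclideanSpace ℝ (Fin d))
    (hmeas : ∀ p, Measurable (ξ p))
    (hindep : iIndepFun ξ ℙ)
    (hident : ∀ p, Measure.map (ξ p) ℙ = Measure.map (ξ 0) ℙ)
    (hmean : ∫ ω, ξ 0 ω ∂ℙ = 0)
    (hmom : Integrable (fun ω => ‖ξ 0 ω‖ ^ 2) ℙ)
    (Ψ : Fin d → Fin d → ℝ)
    (hΨ : ∀ k l, Ψ k l = ∫ ω, ξ 0 ω k * ξ 0 ω l ∂ℙ) :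
    ∀ k l : Fin d, ∀ᵐ ω ∂ℙ, Tendsto
      (fun n : ℕ => -(1 / (n : ℝ)) * ∑ p ∈ Finset.Ico 1 n,
        (ξ p ω k - ξ (p - 1) ω k) * (ξ (p + 1) ω l - ξ p ω l))
      atTop (nhds (Ψ k l)) := by
  intro k l
  have hw := my_diag_slln hmeas hindep hident hmom k l
  have hu0 := my_lag_slln hmeas hindep hident hmean hmom k l 1 2 0 (by omega) (by omega)
  have hu1 := my_lag_slln hmeas hindep hident hmean hmom k l 1 2 1 (by omega) (by omega)
  have hv0 := my_lag_slln hmeas hindep hident hmean hmom k l 2 3 0 (by omega) (by omega)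
  have hv1 := my_lag_slln hmeas hindep hident hmean hmom k l 2 3 1 (by omega) (by omega)
  have hv2 := my_lag_slln hmeas hindep hident hmean hmom k l 2 3 2 (by omega) (by omega)
  filter_upwards [hw, hu0, hu1, hv0, hv1, hv2] with ω hw hu0 hu1 hv0 hv1 hv2
  have hU : Tendsto (fun n : ℕ => (1 / (n : ℝ)) * ∑ p ∈ Finset.range n,
      ξ p ω k * ξ (p + 1) ω l) atTop (nhds 0) := by
    refine myD2 2 (by omega) (fun p => ξ p ω k * ξ (p + 1) ω l) fun r hr => ?_
    interval_cases r
    · exact hu0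
    · exact hu1
  have hV : Tendsto (fun n : ℕ => (1 / (n : ℝ)) * ∑ p ∈ Finset.range n,
      ξ p ω k * ξ (p + 2) ω l) atTop (nhds 0) := by
    refine myD2 3 (by omega) (fun p => ξ p ω k * ξ (p + 2) ω l) fun r hr => ?_
    interval_cases r
    · exact hv0
    · exact hv1
    · exact hv2
  have hW : Tendsto (fun n : ℕ => (1 / (n : ℝ)) * ∑ p ∈ Finset.range n,
      ξ p ω k * ξ p ω l) atTop (nhds (Ψ k l)) := by
    rw [hΨ k l]; exact hw
  have hA := myD3 (fun p => ξ p ω k * ξ p ω l) (Ψ k l) hW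
  have hB := myD3 (fun p => ξ p ω k * ξ (p + 1) ω l) 0 hU
  have hC := myD4 (fun p => ξ p ω k * ξ (p + 2) ω l) hV
  have hD := myD4 (fun p => ξ p ω k * ξ (p + 1) ω l) hU
  have hcomb := (hA.sub hB).add (hC.sub hD)
  rw [sub_zero, sub_zero, add_zero] at hcomb
  refine hcomb.congr fun n => ?_
  have key : ∀ i : ℕ,
      ξ (i + 1) ω k * ξ (i + 1) ω l - ξ (i + 1) ω k * ξ (i + 1 + 1) ω l
        + (ξ i ω k * ξ (i + 2) ω l - ξ i ω k * ξ (i + 1) ω l)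
      = -((ξ (1 + i) ω k - ξ (1 + i - 1) ω k) * (ξ (1 + i + 1) ω l - ξ (1 + i) ω l)) := by
    intro i
    have e1 : 1 + i - 1 = i := by omega
    have e2 : 1 + i + 1 = i + 2 := by omega
    have e3 : 1 + i = i + 1 := by omega
    have e4 : i + 1 + 1 = i + 2 := by omega
    rw [e1, e2, e3, e4]
    ring
  rw [Finset.sum_Ico_eq_sum_range, ← mul_sub, ← Finset.sum_sub_distrib,
    ← mul_sub, ← Finset.sum_sub_distrib, ← mul_add, ← Finset.sum_add_distrib,
    neg_mul, ← mul_neg, ← Finset.sum_neg_distrib]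
  exact congrArg _ (Finset.sum_congr rfl fun i _ => key i)
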